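/- arXiv:1110.6398 — 2 statements merged into one kernel-verified Lean document; each statement's English description precedes it below -/
import Mathlib

section
/- Let b ≥ 2, let E_0, E_1, …, E_k be finite sets of nonnegative integers such that P_{E_0}(X)·P_{E_1}(X)⋯P_{E_k}(X) ≡ 1 + X + ⋯ + X^{b−1} (mod X^b − 1) in ℤ[X], and let 0 ≤ l_1 ≤ ⋯ ≤ l_k be integers. Let D' be a set of nonnegative integers with P_{D'}(X) ≡ P_{E_0}(X)·P_{E_1}(X^{b^{l_1}})⋯P_{E_k}(X^{b^{l_k}}) (mod X^{b^{l_k+1}} − 1) in ℤ[X] (a weak product-form digit set). Then D' satisfies condition (P1) with respect to b, and hence the Kenyon condition with respect to b. -/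
open Polynomial

/-- The mask polynomial `P_A(X) = ∑_{a ∈ A} X^a ∈ ℤ[X]` of a finite set of naturals. -/
noncomputable def mask (A : Finset ℕ) : Polynomial ℤ := ∑ a ∈ A, X ^ a

/-- The Kenyon condition with respect to `b`. -/
def Kenyon (b : ℕ) (D : Finset ℕ) : Prop :=
  ∀ m : ℕ, 1 ≤ m → ∃ k : ℕ, 1 ≤ k ∧
    Polynomial.aeval (Complex.exp (2 * Real.pi * Complex.I * (m : ℂ) / (b : ℂ) ^ k)) (mask D) = 0

/-- Condition (P1). -/
def CondP1 (b : ℕ) (D : Finset ℕ) : Prop :=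
  ∀ d : ℕ, d ∣ b → 1 < d → ∃ j : ℕ, (cyclotomic d ℤ).comp (X ^ b ^ j) ∣ mask D

lemma dvd_comp_of_dvd {p q r : Polynomial ℤ} (h : p ∣ q) : p.comp r ∣ q.comp r := by
  obtain ⟨c, rfl⟩ := h
  exact ⟨c.comp r, (mul_comp p c r)⟩

lemma Xpow_sub_one_dvd {m n : ℕ} (h : m ∣ n) :
    (X ^ m - 1 : Polynomial ℤ) ∣ X ^ n - 1 := by
  obtain ⟨c, rfl⟩ := h
  simpa [← pow_mul] using sub_dvd_pow_sub_pow ((X : Polynomial ℤ) ^ m) 1 c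

lemma step_mono (l : ℕ → ℕ) (k : ℕ) (h : ∀ i : ℕ, i < k → l i ≤ l (i + 1)) :
    ∀ i, i ≤ k → l i ≤ l k := by
  induction k with
  | zero => intro i hi; simp [Nat.le_zero.mp hi]
  | succ n ih =>
    intro i hi
    rcases Nat.lt_or_ge i (n + 1) with h' | h'
    · exact (ih (fun j hj => h j (by omega)) i (by omega)).trans (h n (by omega))
    · have : i = n + 1 := by omega
      simp [this]

/-- A weak product-form digit set satisfies (P1), hence the Kenyon condition. -/
theorem stmt5 (b k : ℕ) (hb : 2 ≤ b) (E : ℕ → Finset ℕ)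
    (l : ℕ → ℕ) (hl0 : l 0 = 0) (hlmono : ∀ i : ℕ, i < k → l i ≤ l (i + 1))
    (hE : (X ^ b - 1 : Polynomial ℤ) ∣
      ((∏ i ∈ Finset.range (k + 1), mask (E i)) - ∑ i ∈ Finset.range b, (X : Polynomial ℤ) ^ i))
    (D' : Finset ℕ)
    (hD' : (X ^ b ^ (l k + 1) - 1 : Polynomial ℤ) ∣
      (mask D' - ∏ i ∈ Finset.range (k + 1), (mask (E i)).comp (X ^ b ^ l i))) :
    CondP1 b D' ∧ Kenyon b D' := by
  have hP1 : CondP1 b D' := by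
    intro d hdb hd1
    have hd0 : 0 < d := by omega
    have hprime : Prime (cyclotomic d ℤ) :=
      UniqueFactorizationMonoid.irreducible_iff_prime.mp (cyclotomic.irreducible hd0)
    have hcd : (cyclotomic d ℤ) ∣ (X ^ b - 1 : Polynomial ℤ) :=
      (cyclotomic_dvd_geom_sum_of_dvd ℤ hdb (by omega)).trans
        ⟨X - 1, (geom_sum_mul (X : Polynomial ℤ) b).symm⟩
    have hprod : cyclotomic d ℤ ∣ ∏ i ∈ Finset.range (k + 1), mask (E i) := by
      have h1 := hcd.trans hE
      have h2 := cyclotomic_dvd_geom_sum_of_dvd ℤ hdb (show d ≠ 1 by omega) (n := b)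
      simpa using dvd_add h1 h2
    obtain ⟨i₀, hi₀mem, hi₀⟩ := hprime.exists_mem_finset_dvd hprod
    refine ⟨l i₀, ?_⟩
    have hle : l i₀ ≤ l k :=
      step_mono l k hlmono i₀ (Finset.mem_range_succ_iff.mp hi₀mem)
    have h1 : (cyclotomic d ℤ).comp (X ^ b ^ l i₀) ∣ (mask (E i₀)).comp (X ^ b ^ l i₀) :=
      dvd_comp_of_dvd hi₀
    have h2 : (mask (E i₀)).comp (X ^ b ^ l i₀) ∣
        ∏ i ∈ Finset.range (k + 1), (mask (E i)).comp (X ^ b ^ l i) :=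
      Finset.dvd_prod_of_mem _ hi₀mem
    have h3 : (cyclotomic d ℤ).comp (X ^ b ^ l i₀) ∣ (X ^ b ^ (l k + 1) - 1 : Polynomial ℤ) := by
      have hc := dvd_comp_of_dvd (r := X ^ b ^ l i₀) hcd
      have heq : ((X : Polynomial ℤ) ^ b - 1).comp (X ^ b ^ l i₀)
          = X ^ b ^ (l i₀ + 1) - 1 := by
        simp [sub_comp, pow_comp, X_comp, one_comp, ← pow_mul, ← pow_succ]
      rw [heq] at hc
      exact hc.trans (Xpow_sub_one_dvd (pow_dvd_pow b (by omega)))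
    have hfin : (cyclotomic d ℤ).comp (X ^ b ^ l i₀) ∣ mask D' := by
      have ha := h3.trans hD'
      have hb' := h1.trans h2
      simpa using dvd_add ha hb'
    exact hfin
  refine ⟨hP1, ?_⟩
  intro m hm
  set t := padicValNat b m with ht
  have hbt : b ^ t ∣ m := pow_padicValNat_dvd
  set m₀ := m / b ^ t with hm₀def
  have hmeq : m = b ^ t * m₀ := (Nat.mul_div_cancel' hbt).symm
  have hbm₀ : ¬ b ∣ m₀ := by
    intro hdvd
    obtain ⟨c, hc⟩ := hdvd
    have hdvd' : b ^ (t + 1) ∣ m := ⟨c, by rw [hmeq, hc]; ring⟩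
    have := (Nat.pow_dvd_iff_le_padicValNat (by omega) (by omega)).mp hdvd'
    omega
  have hm₀0 : m₀ ≠ 0 := fun h => hbm₀ (h ▸ dvd_zero b)
  set g := Nat.gcd b m₀ with hg
  have hgb : g ∣ b := Nat.gcd_dvd_left _ _
  have hgm : g ∣ m₀ := Nat.gcd_dvd_right _ _
  have hg0 : 0 < g := Nat.gcd_pos_of_pos_left _ (by omega)
  set d := b / g with hd
  have hdg : d * g = b := Nat.div_mul_cancel hgb
  have hdb : d ∣ b := Nat.div_dvd_of_dvd hgb
  have hd1 : 1 < d := by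
    rcases Nat.lt_or_ge 1 d with h | h
    · exact h
    · exfalso
      have hd0 : d ≠ 0 := by rintro h0; rw [h0] at hdg; omega
      have : d = 1 := Nat.le_antisymm h (Nat.pos_of_ne_zero hd0)
      rw [this, one_mul] at hdg
      exact hbm₀ (hdg ▸ hgm)
  obtain ⟨j, hj⟩ := hP1 d hdb hd1
  refine ⟨j + t + 1, by omega, ?_⟩
  have hbC : (b : ℂ) ≠ 0 := Nat.cast_ne_zero.mpr (by omega)
  set ω : ℂ := Complex.exp (2 * Real.pi * Complex.I / b) with hω
  have hprim : IsPrimitiveRoot ω b := Complex.isPrimitiveRoot_exp b (by omega)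
  have hz : Complex.exp (2 * Real.pi * Complex.I * (m : ℂ) / (b : ℂ) ^ (j + t + 1)) ^ (b ^ j)
      = ω ^ m₀ := by
    rw [hω, ← Complex.exp_nat_mul, ← Complex.exp_nat_mul]
    congr 1
    have hmC : (m : ℂ) = (b : ℂ) ^ t * (m₀ : ℂ) := by exact_mod_cast hmeq
    push_cast
    rw [hmC]
    have hbk : (b : ℂ) ^ (j + t + 1) = (b : ℂ) ^ j * ((b : ℂ) ^ t * b) := by ring
    rw [hbk]
    field_simp
  have hord : orderOf ω = b := (hprim.eq_orderOf).symm
  have hordpow : orderOf (ω ^ m₀) = d := by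
    rw [orderOf_pow' ω hm₀0, hord]
  have hprim' : IsPrimitiveRoot (ω ^ m₀) d := hordpow ▸ IsPrimitiveRoot.orderOf (ω ^ m₀)
  have hroot : Polynomial.aeval (ω ^ m₀) (cyclotomic d ℤ) = 0 := by
    have := hprim'.isRoot_cyclotomic (show 0 < d by omega)
    simpa [aeval_def, eval₂_eq_eval_map, IsRoot.def, map_cyclotomic] using this
  obtain ⟨q, hq⟩ := hj
  rw [hq, map_mul, aeval_comp]
  simp only [map_pow, aeval_X]
  rw [hz, hroot, zero_mul]
end

section
/- Let b ≥ 2. (a) If B is a symmetric blocking of the Protasov tree of b, then N = {τ(k,m) : (k,m) ∈ B} is a blocking of the Φ-tree of b. (b) Conversely, if N is a blocking of the Φ-tree of b, then B = {(k,m) : (k,m) a vertex of the Protasov tree with τ(k,m) ∈ N} is a symmetric blocking of the Protasov tree of b. -/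
open Polynomial

/-- `(k, m)` is a vertex of the Protasov tree of `b`. -/
def IsVertex (b : ℕ) (v : ℕ × ℕ) : Prop :=
  1 ≤ v.1 ∧ 1 ≤ v.2 ∧ v.2 < b ^ v.1 ∧ ¬ b ∣ v.2

/-- `τ(k, m) = b^k / gcd(m, b^k)`. -/
def tau (b : ℕ) (v : ℕ × ℕ) : ℕ := b ^ v.1 / Nat.gcd v.2 (b ^ v.1)

/-- An infinite path in the Protasov tree of `b` (indices `k ≥ 1`). -/
def IsPath (b : ℕ) (m : ℕ → ℕ) : Prop :=
  (1 ≤ m 1 ∧ m 1 ≤ b - 1) ∧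
    ∀ k : ℕ, 1 ≤ k → 1 ≤ m (k + 1) ∧ m (k + 1) < b ^ (k + 1) ∧ m (k + 1) ≡ m k [MOD b ^ k]

/-- A blocking of the Protasov tree: a finite set of vertices met by every infinite path
exactly once. -/
def IsBlocking (b : ℕ) (B : Set (ℕ × ℕ)) : Prop :=
  B.Finite ∧ (∀ v ∈ B, IsVertex b v) ∧
    ∀ m : ℕ → ℕ, IsPath b m → ∃! k : ℕ, 1 ≤ k ∧ (k, m k) ∈ B

/-- A blocking is symmetric when it contains every vertex with the same `τ`-value as one of
its elements. -/
def IsSymmetric (b : ℕ) (B : Set (ℕ × ℕ)) : Prop :=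
  ∀ v ∈ B, ∀ w : ℕ × ℕ, IsVertex b w → tau b w = tau b v → w ∈ B

/-- An infinite path in the Φ-tree of `b` (indices `k ≥ 1`). -/
def IsPhiPath (b : ℕ) (d : ℕ → ℕ) : Prop :=
  1 < d 1 ∧ d 1 ∣ b ∧ ∀ k : ℕ, 1 ≤ k → 1 < d (k + 1) ∧
    cyclotomic (d (k + 1)) ℤ ∣ (cyclotomic (d k) ℤ).comp (X ^ b)

/-- A blocking of the Φ-tree: a finite set of integers `> 1`, each on some infinite path of
the Φ-tree, met by every infinite path exactly once. -/
def IsPhiBlocking (b : ℕ) (N : Finset ℕ) : Prop :=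
  (∀ e ∈ N, 1 < e ∧ ∃ d : ℕ → ℕ, IsPhiPath b d ∧ ∃ k : ℕ, 1 ≤ k ∧ d k = e) ∧
    ∀ d : ℕ → ℕ, IsPhiPath b d → ∃! k : ℕ, 1 ≤ k ∧ d k ∈ N



section AuxPriv

private lemma gcd_congr_of_modEq {a c n : ℕ} (h : a ≡ c [MOD n]) :
    Nat.gcd a n = Nat.gcd c n := by
  rw [Nat.gcd_comm a n, Nat.gcd_comm c n, Nat.gcd_rec n a, Nat.gcd_rec n c, h]

/-- L1 : the basic arithmetic child relation. -/
private lemma child_arith {b N x : ℕ} (hN : 0 < N) (hb : 0 < b) :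
    (b * N) / Nat.gcd x (b * N)
      = (N / Nat.gcd x N) * Nat.gcd ((b * N) / Nat.gcd x (b * N)) b := by
  set G := Nat.gcd x (b * N) with hGdef
  set g := Nat.gcd x N with hgdef
  set e := (b * N) / G with hedef
  set A := Nat.gcd e b with hAdef
  have hbN : 0 < b * N := Nat.mul_pos hb hN
  have hG : 0 < G := Nat.gcd_pos_of_pos_right x hbN
  have hg : 0 < g := Nat.gcd_pos_of_pos_right x hN
  have heG : e * G = b * N := Nat.div_mul_cancel (Nat.gcd_dvd_right x (b * N))
  have hdg : (N / g) * g = N := Nat.div_mul_cancel (Nat.gcd_dvd_right x N)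
  have hNG : Nat.gcd N G = g := by
    have h1 : Nat.gcd N G = Nat.gcd (Nat.gcd N x) (b * N) := by
      rw [hGdef, Nat.gcd_assoc]
    have h2 : Nat.gcd N x ∣ b * N := (Nat.gcd_dvd_left N x).mul_left b
    rw [h1, Nat.gcd_eq_left h2, Nat.gcd_comm N x]
  have hAG : A * G = b * g := by
    have h1 : Nat.gcd (e * G) (b * G) = Nat.gcd e b * G := Nat.gcd_mul_right e G b
    rw [heG] at h1
    have h2 : Nat.gcd (b * N) (b * G) = b * Nat.gcd N G := Nat.gcd_mul_left b N G
    rw [h1, hNG] at h2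
    rw [hAdef]
    exact h2
  -- e * (G * g) = (N/g) * A * (G * g)
  have key : e * (G * g) = ((N / g) * A) * (G * g) := by
    calc e * (G * g) = (e * G) * g := by ring
      _ = (b * N) * g := by rw [heG]
      _ = (b * ((N / g) * g)) * g := by rw [hdg]
      _ = (N / g) * (b * g) * g := by ring
      _ = (N / g) * (A * G) * g := by rw [hAG]
      _ = ((N / g) * A) * (G * g) := by ring
  have hGg : 0 < G * g := Nat.mul_pos hG hg
  exact Nat.eq_of_mul_eq_mul_right hGg key

/-- order of ζ^b. -/
private lemma isPrimitiveRoot_pow_div {ζ : ℂ} {e b : ℕ} (he : 0 < e) (hb : 0 < b)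
    (hζ : IsPrimitiveRoot ζ e) : IsPrimitiveRoot (ζ ^ b) (e / Nat.gcd e b) := by
  set g := Nat.gcd e b with hgdef
  have hg : 0 < g := Nat.gcd_pos_of_pos_left b he
  have h1 : IsPrimitiveRoot (ζ ^ g) (e / g) := hζ.pow_of_dvd hg.ne' (Nat.gcd_dvd_left e b)
  have h2 : Nat.Coprime (b / g) (e / g) := by
    have := Nat.coprime_div_gcd_div_gcd (m := b) (n := e) (by rwa [Nat.gcd_comm b e, ← hgdef])
    rwa [Nat.gcd_comm b e, ← hgdef] at this
  have h3 : IsPrimitiveRoot ((ζ ^ g) ^ (b / g)) (e / g) := h1.pow_of_coprime _ h2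
  rwa [← pow_mul, Nat.mul_div_cancel' (Nat.gcd_dvd_right e b)] at h3

/-- L2 : forward cyclotomic divisibility. -/
private lemma cyclotomic_dvd_comp {b e : ℕ} (hb : 0 < b) (he : 0 < e) :
    cyclotomic e ℤ ∣ (cyclotomic (e / Nat.gcd e b) ℤ).comp (X ^ b) := by
  set d := e / Nat.gcd e b with hddef
  have hgd : Nat.gcd e b ∣ e := Nat.gcd_dvd_left e b
  have hd : 0 < d := Nat.div_pos (Nat.le_of_dvd he hgd) (Nat.gcd_pos_of_pos_left b he)
  have hζ := Complex.isPrimitiveRoot_exp e he.ne'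
  have hpow : IsPrimitiveRoot ((Complex.exp (2 * Real.pi * Complex.I / e)) ^ b) d :=
    isPrimitiveRoot_pow_div he hb hζ
  have key : cyclotomic e ℚ ∣ (cyclotomic d ℚ).comp (X ^ b) := by
    rw [cyclotomic_eq_minpoly_rat hζ he]
    refine minpoly.dvd ℚ _ ?_
    haveI := NeZero.of_pos hd
    rw [aeval_comp, map_pow, aeval_X, aeval_def, ← eval_map, map_cyclotomic, ← IsRoot.def,
      isRoot_cyclotomic_iff]
    exact hpow
  have h1 : (cyclotomic e ℤ).map (Int.castRingHom ℚ)
      ∣ ((cyclotomic d ℤ).comp (X ^ b)).map (Int.castRingHom ℚ) := by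
    rwa [map_cyclotomic, Polynomial.map_comp, map_cyclotomic, Polynomial.map_pow, map_X]
  exact (Polynomial.map_dvd_map (Int.castRingHom ℚ) (fun _ _ h => by simpa using h)
    (cyclotomic.monic e ℤ)).mp h1

/-- L3 : converse. -/
private lemma eq_of_cyclotomic_dvd {b e dn : ℕ} (hb : 0 < b) (he : 1 < e)
    (h : cyclotomic e ℤ ∣ (cyclotomic dn ℤ).comp (X ^ b)) :
    dn = e / Nat.gcd e b := by
  have hepos : 0 < e := by omega
  have hζ := Complex.isPrimitiveRoot_exp e hepos.ne'
  set ζ := Complex.exp (2 * Real.pi * Complex.I / e) with hζdef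
  have hC : cyclotomic e ℂ ∣ (cyclotomic dn ℂ).comp (X ^ b) := by
    have := Polynomial.map_dvd (Int.castRingHom ℂ) h
    rwa [map_cyclotomic, Polynomial.map_comp, map_cyclotomic, Polynomial.map_pow, map_X] at this
  have hroot : (cyclotomic dn ℂ).eval (ζ ^ b) = 0 := by
    have h0 : (cyclotomic e ℂ).eval ζ = 0 := by
      haveI := NeZero.of_pos hepos
      rw [← IsRoot.def, isRoot_cyclotomic_iff]; exact hζ
    obtain ⟨q, hq⟩ := hC
    have := congrArg (fun p => Polynomial.eval ζ p) hq
    simp only [eval_comp, eval_pow, eval_X, eval_mul] at this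
    rw [this, h0, zero_mul]
  have hdn : 0 < dn := by
    rcases Nat.eq_zero_or_pos dn with h0 | h0
    · rw [h0, cyclotomic_zero, eval_one] at hroot; exact absurd hroot one_ne_zero
    · exact h0
  haveI := NeZero.of_pos hdn
  have hprim : IsPrimitiveRoot (ζ ^ b) dn := by
    rwa [← isRoot_cyclotomic_iff (n := dn) (R := ℂ)]
  exact hprim.unique (isPrimitiveRoot_pow_div hepos hb hζ)

/-- L9 : key CRT existence. -/
private lemma exists_gcd_add_mul {b d s u : ℕ} (hb : 0 < b) (hd : 0 < d)
    (hu : Nat.Coprime u d) (hs : s = Nat.gcd (d * s) b) (hspos : 0 < s) :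
    ∃ t : ℕ, Nat.gcd (u + t * d) b = b / s := by
  have hsb : s ∣ b := hs ▸ Nat.gcd_dvd_right (d * s) b
  set q := b / s with hqdef
  have hqs : q * s = b := Nat.div_mul_cancel hsb
  have hqpos : 0 < q := Nat.div_pos (Nat.le_of_dvd hb hsb) hspos
  have hqd : Nat.Coprime q d := by
    have h1 : Nat.gcd q d * s ∣ b := by
      rw [← hqs]; exact Nat.mul_dvd_mul (Nat.gcd_dvd_left q d) dvd_rfl
    have h2 : Nat.gcd q d * s ∣ d * s := Nat.mul_dvd_mul (Nat.gcd_dvd_right q d) dvd_rfl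
    have h3 : Nat.gcd q d * s ∣ s := by
      have h3' : Nat.gcd q d * s ∣ Nat.gcd (d * s) b := Nat.dvd_gcd h2 h1
      rwa [← hs] at h3'
    have h4 : Nat.gcd q d ∣ 1 := by
      have h5 : Nat.gcd q d * s ∣ 1 * s := by rwa [one_mul]
      exact (Nat.mul_dvd_mul_iff_right hspos).mp h5
    exact Nat.dvd_one.mp h4
  haveI : NeZero (d * s) := ⟨(Nat.mul_pos hd hspos).ne'⟩
  have hdds : d ∣ d * s := dvd_mul_right d s
  set υ : (ZMod d)ˣ := ZMod.unitOfCoprime u hu with hυ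
  set β : (ZMod d)ˣ := ZMod.unitOfCoprime q hqd with hβ
  obtain ⟨V, hV⟩ := ZMod.unitsMap_surjective hdds (β⁻¹ * υ)
  set v := ((V : ZMod (d * s))).val with hvdef
  have hv : Nat.Coprime v (d * s) := ZMod.val_coe_unit_coprime V
  have hvs : Nat.Coprime v s := hv.coprime_dvd_right (dvd_mul_left s d)
  have hcast : ((v : ℕ) : ZMod d) = ((β⁻¹ * υ : (ZMod d)ˣ) : ZMod d) := by
    have h1 : (ZMod.castHom hdds (ZMod d)) ((V : ZMod (d * s))) =
        ((β⁻¹ * υ : (ZMod d)ˣ) : ZMod d) := by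
      have := congrArg (fun (u : (ZMod d)ˣ) => (u : ZMod d)) hV
      simpa [ZMod.unitsMap_def] using this
    rw [← h1, ZMod.castHom_apply, hvdef, ZMod.natCast_val]
  have hmodd : q * v ≡ u [MOD d] := by
    rw [← ZMod.natCast_eq_natCast_iff]
    push_cast
    rw [hcast]
    have hq' : ((q : ℕ) : ZMod d) = (β : ZMod d) := (ZMod.coe_unitOfCoprime q hqd).symm
    rw [hq']
    have : (β : ZMod d) * ((β⁻¹ * υ : (ZMod d)ˣ) : ZMod d)
        = ((β * (β⁻¹ * υ) : (ZMod d)ˣ) : ZMod d) := by push_cast; ring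
    rw [this, mul_inv_cancel_left]
    exact ZMod.coe_unitOfCoprime u hu
  -- W
  set W := q * v + b * d * u with hWdef
  have hWu : u ≤ W := by
    have : u ≤ b * d * u := Nat.le_mul_of_pos_left u (Nat.mul_pos hb hd)
    omega
  have hWmodd : W ≡ u [MOD d] := by
    have h1 : W ≡ q * v + 0 [MOD d] := by
      refine Nat.ModEq.add_left _ ?_
      exact (Nat.modEq_zero_iff_dvd).mpr ⟨b * u, by ring⟩
    simpa using h1.trans hmodd
  have hWgcd : Nat.gcd W b = q := by
    have h1 : q * v ≡ W [MOD b] := by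
      have hW' : W = q * v + (d * u) * b := by rw [hWdef]; ring
      rw [hW']
      refine (Nat.modEq_iff_dvd' (Nat.le_add_right _ _)).mpr ?_
      have hsub : q * v + (d * u) * b - q * v = (d * u) * b := by omega
      rw [hsub]
      exact ⟨d * u, by ring⟩
    rw [gcd_congr_of_modEq h1.symm, ← hqs, Nat.gcd_mul_left, hvs, mul_one]
  have hdvd : d ∣ W - u := (Nat.modEq_iff_dvd' hWu).mp hWmodd.symm
  refine ⟨(W - u) / d, ?_⟩
  have : u + (W - u) / d * d = W := by
    rw [Nat.div_mul_cancel hdvd]; omega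
  rw [this, hWgcd]

end AuxPriv

section AuxPriv2

private lemma exists_lift {b k dk e p : ℕ} (hb : 2 ≤ b) (hk : 1 ≤ k)
    (hdk : 0 < dk) (hdvd : dk ∣ b ^ k)
    (hgcd : Nat.gcd p (b ^ k) = b ^ k / dk)
    (hchild : e = dk * Nat.gcd e b) (hepos : 0 < e) :
    ∃ t : ℕ, Nat.gcd (p + t * b ^ k) (b ^ (k + 1)) = b ^ (k + 1) / e := by
  have hbpos : 0 < b := by omega
  have hbk : 0 < b ^ k := Nat.pow_pos hbpos
  set g := b ^ k / dk with hgdef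
  have hgdk : g * dk = b ^ k := Nat.div_mul_cancel hdvd
  have hgp : g ∣ p := hgcd ▸ Nat.gcd_dvd_left p (b ^ k)
  have hgpos : 0 < g := Nat.div_pos (Nat.le_of_dvd hbk hdvd) hdk
  set u := p / g with hudef
  have hpu : g * u = p := Nat.mul_div_cancel' hgp
  have hcop : Nat.Coprime u dk := by
    have h1 : Nat.gcd (g * u) (g * dk) = g * Nat.gcd u dk := Nat.gcd_mul_left g u dk
    rw [hpu, hgdk, hgcd] at h1
    have h2 : g * 1 = g * Nat.gcd u dk := by rw [mul_one]; exact h1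
    exact (Nat.eq_of_mul_eq_mul_left hgpos h2).symm
  set s := Nat.gcd e b with hsdef
  have hspos : 0 < s := Nat.gcd_pos_of_pos_right e hbpos
  have hs : s = Nat.gcd (dk * s) b := by rw [← hchild]
  obtain ⟨t, ht⟩ := exists_gcd_add_mul hbpos hdk hcop hs hspos
  refine ⟨t, ?_⟩
  have hsb : s ∣ b := Nat.gcd_dvd_right e b
  have hbs : (b / s) * s = b := Nat.div_mul_cancel hsb
  have h1 : p + t * b ^ k = g * (u + t * dk) := by
    rw [← hpu, ← hgdk]; ring
  have h2 : b ^ (k + 1) = g * (dk * b) := by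
    rw [pow_succ, ← hgdk]; ring
  have h3 : Nat.gcd (u + t * dk) (dk * b) = Nat.gcd (u + t * dk) b := by
    have hcop2 : Nat.Coprime (u + t * dk) dk := by
      have := Nat.gcd_add_mul_right_left dk u t
      rwa [Nat.Coprime, this]
    exact Nat.Coprime.gcd_mul_left_cancel_right b hcop2.symm
  have h4 : Nat.gcd (p + t * b ^ k) (b ^ (k + 1)) = g * (b / s) := by
    rw [h1, h2, Nat.gcd_mul_left, h3, ht]
  rw [h4]
  symm
  apply Nat.div_eq_of_eq_mul_left hepos
  calc b ^ (k + 1) = b ^ k * b := by rw [pow_succ]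
    _ = (g * dk) * ((b / s) * s) := by rw [hgdk, hbs]
    _ = g * (b / s) * (dk * s) := by ring
    _ = g * (b / s) * e := by rw [← hchild]

open scoped Classical in
private noncomputable def liftPath (b : ℕ) (d : ℕ → ℕ) : ℕ → ℕ
  | 0 => 0
  | 1 => b / d 1
  | (k + 2) =>
    let p := liftPath b d (k + 1)
    if h : ∃ t, Nat.gcd (p + t * b ^ (k + 1)) (b ^ (k + 2)) = b ^ (k + 2) / d (k + 2) then
      (p + h.choose * b ^ (k + 1)) % b ^ (k + 2)
    else 0

private lemma phiPath_gt_one {b : ℕ} {d : ℕ → ℕ} (hd : IsPhiPath b d) :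
    ∀ k, 1 ≤ k → 1 < d k := by
  intro k hk
  match k, hk with
  | 1, _ => exact hd.1
  | (j + 2), _ => exact (hd.2.2 (j + 1) (by omega)).1

private lemma phiPath_child {b : ℕ} (hb : 2 ≤ b) {d : ℕ → ℕ} (hd : IsPhiPath b d) :
    ∀ k, 1 ≤ k → d (k + 1) = d k * Nat.gcd (d (k + 1)) b := by
  intro k hk
  have h1 := (hd.2.2 k hk).2
  have h2 : 1 < d (k + 1) := (hd.2.2 k hk).1
  have h3 : d k = d (k + 1) / Nat.gcd (d (k + 1)) b :=
    eq_of_cyclotomic_dvd (by omega) h2 h1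
  have h4 : Nat.gcd (d (k + 1)) b ∣ d (k + 1) := Nat.gcd_dvd_left _ _
  rw [h3, Nat.div_mul_cancel h4]

private lemma liftPath_spec {b : ℕ} (hb : 2 ≤ b) {d : ℕ → ℕ} (hd : IsPhiPath b d) :
    ∀ k, 1 ≤ k →
      (1 ≤ liftPath b d k ∧ liftPath b d k < b ^ k ∧ ¬ b ∣ liftPath b d k) ∧
      Nat.gcd (liftPath b d k) (b ^ k) = b ^ k / d k ∧ d k ∣ b ^ k ∧
      (2 ≤ k → liftPath b d k ≡ liftPath b d (k - 1) [MOD b ^ (k - 1)]) := by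
  have hbpos : 0 < b := by omega
  intro k hk
  induction k with
  | zero => omega
  | succ k ih =>
    rcases Nat.eq_or_lt_of_le hk with h1 | h1
    · -- k + 1 = 1
      have hk0 : k = 0 := by omega
      subst hk0
      have hd1 : 1 < d 1 := hd.1
      have hdb : d 1 ∣ b := hd.2.1
      have hq : liftPath b d 1 = b / d 1 := rfl
      have hpos : 0 < b / d 1 := Nat.div_pos (Nat.le_of_dvd hbpos hdb) (by omega)
      have hlt : b / d 1 < b := Nat.div_lt_self hbpos hd1
      constructor
      · refine ⟨by rw [hq]; omega, by rw [hq, pow_one]; omega, ?_⟩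
        rw [hq]
        intro hdvd
        have := Nat.le_of_dvd hpos hdvd
        omega
      · refine ⟨?_, by rw [pow_one]; exact hdb, by omega⟩
        rw [hq, pow_one]
        exact Nat.gcd_eq_left (Nat.div_dvd_of_dvd hdb)
    · -- k ≥ 1
      have hk1 : 1 ≤ k := by omega
      obtain ⟨⟨hp1, hp2, hp3⟩, hpgcd, hpdvd, _⟩ := ih hk1
      set p := liftPath b d k with hpdef
      have hchild := phiPath_child hb hd k hk1
      have hdk1 : 1 < d k := phiPath_gt_one hd k hk1
      have hdpos : 0 < d (k + 1) := by
        have := phiPath_gt_one hd (k + 1) (by omega); omega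
      have hddvd : d (k + 1) ∣ b ^ (k + 1) := by
        rw [hchild, pow_succ]
        exact Nat.mul_dvd_mul hpdvd (Nat.gcd_dvd_right _ _)
      have hex : ∃ t, Nat.gcd (p + t * b ^ k) (b ^ (k + 1)) = b ^ (k + 1) / d (k + 1) :=
        exists_lift hb hk1 (by omega) hpdvd hpgcd hchild hdpos
      -- unfold liftPath at k + 1
      obtain ⟨j, rfl⟩ : ∃ j, k = j + 1 := ⟨k - 1, by omega⟩
      have heq : liftPath b d (j + 2) =
          (p + hex.choose * b ^ (j + 1)) % b ^ (j + 2) := by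
        rw [liftPath]
        simp only [← hpdef]
        rw [dif_pos hex]
      set t0 := hex.choose with ht0
      have hspec := hex.choose_spec
      set W := p + t0 * b ^ (j + 1) with hWdef
      have hmod1 : liftPath b d (j + 2) ≡ W [MOD b ^ (j + 2)] := by
        rw [heq]; exact Nat.mod_modEq W (b ^ (j + 2))
      have hmodp : liftPath b d (j + 2) ≡ p [MOD b ^ (j + 1)] := by
        have h5 : liftPath b d (j + 2) ≡ W [MOD b ^ (j + 1)] :=
          Nat.ModEq.of_dvd (pow_dvd_pow b (by omega)) hmod1
        have h6 : W ≡ p [MOD b ^ (j + 1)] := by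
          have : p ≡ W [MOD b ^ (j + 1)] := by
            refine (Nat.modEq_iff_dvd' (Nat.le_add_right _ _)).mpr ?_
            have : p + t0 * b ^ (j + 1) - p = t0 * b ^ (j + 1) := by omega
            rw [this]
            exact ⟨t0, by ring⟩
          exact this.symm
        exact h5.trans h6
      have hgcdnew : Nat.gcd (liftPath b d (j + 2)) (b ^ (j + 2)) =
          b ^ (j + 2) / d (j + 2) := by
        rw [gcd_congr_of_modEq hmod1, hspec]
      have hnotdvd : ¬ b ∣ liftPath b d (j + 2) := by
        intro hdvd
        have h7 : liftPath b d (j + 2) ≡ p [MOD b] :=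
          Nat.ModEq.of_dvd (dvd_pow_self b (Nat.succ_ne_zero j)) hmodp
        have h8 : p ≡ 0 [MOD b] := by
          have := (Nat.modEq_zero_iff_dvd).mpr hdvd
          exact h7.symm.trans this
        exact hp3 ((Nat.modEq_zero_iff_dvd).mp h8)
      have hlt : liftPath b d (j + 2) < b ^ (j + 2) := by
        rw [heq]
        exact Nat.mod_lt _ (Nat.pow_pos hbpos)
      have hge : 1 ≤ liftPath b d (j + 2) := by
        rcases Nat.eq_zero_or_pos (liftPath b d (j + 2)) with h0 | h0
        · exfalso; exact hnotdvd (h0 ▸ dvd_zero b)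
        · exact h0
      exact ⟨⟨hge, hlt, hnotdvd⟩, hgcdnew, hddvd, fun _ => hmodp⟩

end AuxPriv2

section AuxPriv3

private lemma tau_gt_one {b : ℕ} (hb : 2 ≤ b) {v : ℕ × ℕ} (hv : IsVertex b v) :
    1 < tau b v := by
  obtain ⟨hk, hm1, hm2, hm3⟩ := hv
  set g := Nat.gcd v.2 (b ^ v.1) with hgdef
  have hbk : 0 < b ^ v.1 := Nat.pow_pos (by omega)
  have hgd : g ∣ b ^ v.1 := Nat.gcd_dvd_right _ _
  have hmc : (b ^ v.1 / g) * g = b ^ v.1 := Nat.div_mul_cancel hgd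
  have htau : tau b v = b ^ v.1 / g := rfl
  rw [htau]
  rcases Nat.lt_or_ge (b ^ v.1 / g) 2 with h | h
  · exfalso
    interval_cases h' : (b ^ v.1 / g)
    · simp at hmc; omega
    · rw [one_mul] at hmc
      have hdv : b ^ v.1 ∣ v.2 := by
        rw [← hmc]; exact Nat.gcd_dvd_left v.2 (b ^ v.1)
      have := Nat.le_of_dvd (by omega) hdv
      omega
  · omega

private lemma tau_dvd_pow {b : ℕ} (hb : 2 ≤ b) (v : ℕ × ℕ) :
    tau b v ∣ b ^ v.1 :=
  Nat.div_dvd_of_dvd (Nat.gcd_dvd_right v.2 (b ^ v.1))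

private lemma tau_not_dvd {b : ℕ} (hb : 2 ≤ b) {v : ℕ × ℕ} (hv : IsVertex b v) :
    ¬ tau b v ∣ b ^ (v.1 - 1) := by
  obtain ⟨hk, hm1, hm2, hm3⟩ := hv
  intro hdvd
  set g := Nat.gcd v.2 (b ^ v.1) with hgdef
  have hgd : g ∣ b ^ v.1 := Nat.gcd_dvd_right _ _
  have hτpos : 0 < tau b v := by
    have := tau_gt_one hb ⟨hk, hm1, hm2, hm3⟩; omega
  have hmc : tau b v * g = b ^ v.1 := Nat.div_mul_cancel hgd
  obtain ⟨c, hc⟩ := hdvd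
  have hpow : b ^ v.1 = b * b ^ (v.1 - 1) := by
    rw [← pow_succ']
    congr 1
    omega
  have h1 : tau b v * g = tau b v * (b * c) := by
    rw [hmc, hpow, hc]; ring
  have h2 : g = b * c := Nat.eq_of_mul_eq_mul_left hτpos h1
  have h3 : b ∣ v.2 := by
    have : g ∣ v.2 := Nat.gcd_dvd_left _ _
    exact dvd_trans (h2 ▸ dvd_mul_right b c) this
  exact hm3 h3

private lemma level_unique {b d k k' : ℕ} (hb : 2 ≤ b)
    (hk : 1 ≤ k) (hk' : 1 ≤ k')
    (h1 : d ∣ b ^ k) (h2 : ¬ d ∣ b ^ (k - 1))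
    (h1' : d ∣ b ^ k') (h2' : ¬ d ∣ b ^ (k' - 1)) : k = k' := by
  rcases lt_trichotomy k k' with h | h | h
  · exfalso; exact h2' (h1.trans (pow_dvd_pow b (by omega)))
  · exact h
  · exfalso; exact h2 (h1'.trans (pow_dvd_pow b (by omega)))

private lemma path_vertex {b : ℕ} (hb : 2 ≤ b) {m : ℕ → ℕ} (hm : IsPath b m) :
    ∀ k, 1 ≤ k → IsVertex b (k, m k) := by
  intro k hk
  induction k with
  | zero => omega
  | succ k ih =>
    rcases Nat.eq_or_lt_of_le hk with h1 | h1
    · have hk0 : k = 0 := by omega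
      subst hk0
      obtain ⟨⟨ha, hb'⟩, _⟩ := hm
      show IsVertex b (1, m 1)
      refine ⟨le_refl 1, ha, by rw [pow_one]; omega, ?_⟩
      intro hdvd
      have := Nat.le_of_dvd (by omega) hdvd
      omega
    · have hk1 : 1 ≤ k := by omega
      obtain ⟨_, _, _, hnd⟩ := ih hk1
      obtain ⟨hge, hlt, hmod⟩ := hm.2 k hk1
      refine ⟨by omega, hge, hlt, ?_⟩
      intro hdvd
      apply hnd
      have h7 : m (k + 1) ≡ m k [MOD b] :=
        Nat.ModEq.of_dvd (dvd_pow_self b (by omega)) hmod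
      have h8 := (Nat.modEq_zero_iff_dvd).mpr hdvd
      exact (Nat.modEq_zero_iff_dvd).mp (h7.symm.trans h8)

private lemma path_tau_phi {b : ℕ} (hb : 2 ≤ b) {m : ℕ → ℕ} (hm : IsPath b m) :
    IsPhiPath b (fun k => tau b (k, m k)) := by
  have hbpos : 0 < b := by omega
  refine ⟨tau_gt_one hb (path_vertex hb hm 1 le_rfl), ?_, ?_⟩
  · have := tau_dvd_pow hb (1, m 1)
    rwa [pow_one] at this
  · intro k hk
    have hv1 := path_vertex hb hm (k + 1) (by omega)
    refine ⟨tau_gt_one hb hv1, ?_⟩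
    have hmod := (hm.2 k hk).2.2
    have hgcdeq : Nat.gcd (m (k + 1)) (b ^ k) = Nat.gcd (m k) (b ^ k) :=
      gcd_congr_of_modEq hmod
    have harith := child_arith (N := b ^ k) (x := m (k + 1))
      (Nat.pow_pos hbpos) hbpos
    -- identify e and d
    have hE : tau b (k + 1, m (k + 1)) = (b * b ^ k) / Nat.gcd (m (k + 1)) (b * b ^ k) := by
      unfold tau
      simp only
      rw [pow_succ]
      ring_nf
    have hD : tau b (k, m k) = b ^ k / Nat.gcd (m (k + 1)) (b ^ k) := by
      unfold tau
      simp only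
      rw [hgcdeq]
    set e := tau b (k + 1, m (k + 1)) with hedef
    set dd := tau b (k, m k) with hddef
    have hchild : e = dd * Nat.gcd e b := by
      rw [hE, hD]
      convert harith using 3
    have hepos : 0 < e := by
      have := tau_gt_one hb hv1; rw [← hedef] at this; omega
    have hgcdpos : 0 < Nat.gcd e b := Nat.gcd_pos_of_pos_right e hbpos
    have hdd : e / Nat.gcd e b = dd := Nat.div_eq_of_eq_mul_left hgcdpos hchild
    have hfin := cyclotomic_dvd_comp (b := b) (e := e) hbpos hepos
    rw [hdd] at hfin
    exact hfin

private lemma restrict_path {b : ℕ} (hb : 2 ≤ b) {v : ℕ × ℕ} (hv : IsVertex b v) :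
    IsPath b (fun j => v.2 % b ^ j) ∧ v.2 % b ^ v.1 = v.2 := by
  obtain ⟨hk, hm1, hm2, hm3⟩ := hv
  have hbpos : 0 < b := by omega
  have hmodeq : v.2 % b ^ v.1 = v.2 := Nat.mod_eq_of_lt hm2
  have hnd : ∀ j, 1 ≤ j → ¬ b ∣ v.2 % b ^ j := by
    intro j hj hdvd
    apply hm3
    have h1 : b ∣ b ^ j := dvd_pow_self b (by omega)
    have h2 : v.2 % b ^ j ≡ v.2 [MOD b ^ j] := Nat.mod_modEq v.2 (b ^ j)
    have h3 : v.2 % b ^ j ≡ v.2 [MOD b] := Nat.ModEq.of_dvd h1 h2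
    have h4 := (Nat.modEq_zero_iff_dvd).mpr hdvd
    exact (Nat.modEq_zero_iff_dvd).mp (h3.symm.trans h4)
  have hpos : ∀ j, 1 ≤ j → 1 ≤ v.2 % b ^ j := by
    intro j hj
    have h0 : ¬ b ∣ v.2 % b ^ j := hnd j hj
    rcases Nat.eq_zero_or_pos (v.2 % b ^ j) with h | h
    · exact absurd (h ▸ dvd_zero b) h0
    · omega
  refine ⟨⟨⟨?_, ?_⟩, ?_⟩, hmodeq⟩
  · exact hpos 1 le_rfl
  · show v.2 % b ^ 1 ≤ b - 1
    have h1 : v.2 % b ^ 1 < b := by rw [pow_one]; exact Nat.mod_lt _ hbpos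
    omega
  · intro k hk1
    refine ⟨hpos (k + 1) (by omega), Nat.mod_lt _ (Nat.pow_pos hbpos), ?_⟩
    have h1 : v.2 % b ^ (k + 1) ≡ v.2 [MOD b ^ k] :=
      Nat.ModEq.of_dvd (pow_dvd_pow b (by omega)) (Nat.mod_modEq v.2 (b ^ (k + 1)))
    have h2 : v.2 % b ^ k ≡ v.2 [MOD b ^ k] := Nat.mod_modEq v.2 (b ^ k)
    exact h1.trans h2.symm

private lemma phiPath_lift {b : ℕ} (hb : 2 ≤ b) {d : ℕ → ℕ} (hd : IsPhiPath b d) :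
    ∃ m : ℕ → ℕ, IsPath b m ∧ ∀ k, 1 ≤ k → tau b (k, m k) = d k := by
  have hbpos : 0 < b := by omega
  refine ⟨liftPath b d, ⟨⟨?_, ?_⟩, ?_⟩, ?_⟩
  · exact (liftPath_spec hb hd 1 le_rfl).1.1
  · have h1 := (liftPath_spec hb hd 1 le_rfl).1.2.1
    rw [pow_one] at h1
    omega
  · intro k hk
    obtain ⟨⟨h1, h2, _⟩, _, _, _⟩ := liftPath_spec hb hd (k + 1) (by omega)
    refine ⟨h1, h2, ?_⟩
    have := (liftPath_spec hb hd (k + 1) (by omega)).2.2.2 (by omega)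
    simpa using this
  · intro k hk
    obtain ⟨_, hgcd, hdvd, _⟩ := liftPath_spec hb hd k hk
    unfold tau
    simp only
    rw [hgcd]
    exact Nat.div_div_self hdvd (Nat.pow_pos hbpos).ne'

end AuxPriv3

/-- (a) The `τ`-image of a symmetric blocking of the Protasov tree is a blocking of the
Φ-tree; (b) the `τ`-preimage of a blocking of the Φ-tree is a symmetric blocking of the
Protasov tree. -/
theorem stmt14 (b : ℕ) (hb : 2 ≤ b) :
    (∀ B : Finset (ℕ × ℕ), IsBlocking b ↑B → IsSymmetric b ↑B →
      IsPhiBlocking b (B.image (tau b))) ∧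
    (∀ N : Finset ℕ, IsPhiBlocking b N →
      IsBlocking b {v : ℕ × ℕ | IsVertex b v ∧ tau b v ∈ N} ∧
      IsSymmetric b {v : ℕ × ℕ | IsVertex b v ∧ tau b v ∈ N}) := by
  constructor
  · -- (a)
    intro B hB hsymm
    obtain ⟨hfin, hvert, hblock⟩ := hB
    constructor
    · intro e he
      obtain ⟨v, hvB, hve⟩ := Finset.mem_image.mp he
      have hv : IsVertex b v := hvert v (by exact_mod_cast hvB)
      refine ⟨hve ▸ tau_gt_one hb hv, ?_⟩
      obtain ⟨hpath, hfix⟩ := restrict_path hb hv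
      refine ⟨fun j => tau b (j, v.2 % b ^ j), path_tau_phi hb hpath, v.1, hv.1, ?_⟩
      show tau b (v.1, v.2 % b ^ v.1) = e
      rw [hfix, ← hve]
    · intro d hd
      obtain ⟨m, hm, htau⟩ := phiPath_lift hb hd
      obtain ⟨k₀, ⟨hk₀1, hk₀B⟩, huniq⟩ := hblock m hm
      refine ⟨k₀, ⟨hk₀1, ?_⟩, ?_⟩
      · exact Finset.mem_image.mpr ⟨(k₀, m k₀), by exact_mod_cast hk₀B, htau k₀ hk₀1⟩
      · rintro j ⟨hj1, hjN⟩
        obtain ⟨w, hwB, hwe⟩ := Finset.mem_image.mp hjN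
        have hvj : IsVertex b (j, m j) := path_vertex hb hm j hj1
        have htj : tau b (j, m j) = tau b w := by rw [htau j hj1, ← hwe]
        have hmem : (j, m j) ∈ (B : Set (ℕ × ℕ)) :=
          hsymm w (by exact_mod_cast hwB) (j, m j) hvj htj
        exact huniq j ⟨hj1, hmem⟩
  · -- (b)
    intro N hN
    obtain ⟨hN1, hNpath⟩ := hN
    have hsym : IsSymmetric b {v : ℕ × ℕ | IsVertex b v ∧ tau b v ∈ N} := by
      intro v hv w hw htw
      exact ⟨hw, htw ▸ hv.2⟩
    refine ⟨⟨?_, ?_, ?_⟩, hsym⟩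
    · -- finiteness
      have hsub : {v : ℕ × ℕ | IsVertex b v ∧ tau b v ∈ N} ⊆
          ⋃ e ∈ (N : Set ℕ), {v : ℕ × ℕ | IsVertex b v ∧ tau b v = e} := by
        intro v hv
        exact Set.mem_biUnion hv.2 ⟨hv.1, rfl⟩
      refine Set.Finite.subset (Set.Finite.biUnion N.finite_toSet ?_) hsub
      intro e _
      by_cases hne : ({v : ℕ × ℕ | IsVertex b v ∧ tau b v = e}).Nonempty
      · obtain ⟨v₀, hv₀⟩ := hne
        refine Set.Finite.subset
          ((Set.finite_singleton v₀.1).prod (Set.finite_Iio (b ^ v₀.1))) ?_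
        rintro ⟨k, m⟩ ⟨hvert', htau'⟩
        have h1 : e ∣ b ^ k := by rw [← htau']; exact tau_dvd_pow hb (k, m)
        have h2 : ¬ e ∣ b ^ (k - 1) := by rw [← htau']; exact tau_not_dvd hb hvert'
        have h1' : e ∣ b ^ v₀.1 := by rw [← hv₀.2]; exact tau_dvd_pow hb v₀
        have h2' : ¬ e ∣ b ^ (v₀.1 - 1) := by rw [← hv₀.2]; exact tau_not_dvd hb hv₀.1
        have hk : k = v₀.1 := level_unique hb hvert'.1 hv₀.1.1 h1 h2 h1' h2'
        constructor
        · simp [hk]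
        · show m ∈ Set.Iio (b ^ v₀.1)
          have : m < b ^ k := hvert'.2.2.1
          rwa [hk] at this
      · rw [Set.not_nonempty_iff_eq_empty] at hne; rw [hne]; exact Set.finite_empty
    · exact fun v hv => hv.1
    · intro m hm
      have hphi := path_tau_phi hb hm
      obtain ⟨k₀, ⟨hk₀1, hk₀N⟩, huniq⟩ := hNpath _ hphi
      refine ⟨k₀, ⟨hk₀1, path_vertex hb hm k₀ hk₀1, hk₀N⟩, ?_⟩
      rintro j ⟨hj1, _, hjN⟩
      exact huniq j ⟨hj1, hjN⟩
end
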